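/- Fix p ∈ (1/2, 1) and an integer k ≥ 2. Let (X_i)_{i≥1} be i.i.d. with P(X_i = 1) = p and P(X_i = −1) = 1−p, K_n = Σ_{i=1}^n X_i with K_0 = 0, and τ = inf{ n ≥ 0 : |K_n| = k }. Then the tail probability of the cascade time satisfies P[τ > N] = Θ( λ^{N/2} ) with λ = 4p(1−p)·cos²(π/(2k)): there exist constants 0 < a ≤ b and an integer N₀ such that for all N ≥ N₀, a·λ^{N/2} ≤ P[τ > N] ≤ b·λ^{N/2}. -/

import Mathlib

set_option maxRecDepth 4000

open MeasureTheory ProbabilityTheory Real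


noncomputable def casW (p : ℝ) (k : ℕ) (x : ℤ) : ℝ :=
  (Real.sqrt ((1 - p) / p)) ^ x * Real.sin (((x : ℝ) + k) * (π / (2 * k)))

noncomputable def casF (p : ℝ) (k : ℕ) : ℕ → ℤ → ℝ
  | 0, x => if |x| = (k : ℤ) then 0 else 1
  | (N+1), x => if |x| = (k : ℤ) then 0
      else p * casF p k N (x + 1) + (1 - p) * casF p k N (x - 1)

section
variable {p : ℝ} {k : ℕ}

lemma casF_nonneg (hp : p ∈ Set.Ioo (1 / 2 : ℝ) 1) : ∀ N x, 0 ≤ casF p k N x := by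
  obtain ⟨hp1, hp2⟩ := hp
  intro N
  induction N with
  | zero => intro x; rw [casF]; split <;> norm_num
  | succ N ih =>
    intro x; rw [casF]; split
    · rfl
    · have h1 := ih (x + 1); have h2 := ih (x - 1); nlinarith

lemma casW_eigen (hp : p ∈ Set.Ioo (1 / 2 : ℝ) 1) (hk : 2 ≤ k) (x : ℤ) :
    p * casW p k (x + 1) + (1 - p) * casW p k (x - 1) =
      (2 * Real.sqrt (p * (1 - p)) * Real.cos (π / (2 * k))) * casW p k x := by
  obtain ⟨hp1, hp2⟩ := hp
  have hp0 : 0 < p := by linarith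
  have h1p : 0 < 1 - p := by linarith
  set r := Real.sqrt ((1 - p) / p) with hr
  have hrpos : 0 < r := Real.sqrt_pos.mpr (by positivity)
  have h1 : p * r = Real.sqrt (p * (1 - p)) := by
    rw [hr, show p * (1 - p) = p ^ 2 * ((1 - p) / p) by field_simp,
      Real.sqrt_mul (by positivity), Real.sqrt_sq hp0.le]
  have h2' : (1 - p) = r * Real.sqrt (p * (1 - p)) := by
    rw [hr, ← Real.sqrt_mul (by positivity),
      show (1 - p) / p * (p * (1 - p)) = (1 - p) ^ 2 by field_simp,
      Real.sqrt_sq h1p.le]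
  have h2 : (1 - p) / r = Real.sqrt (p * (1 - p)) := by
    rw [div_eq_iff hrpos.ne']; linear_combination h2'
  set θ := π / (2 * k) with hθ
  set a := ((x : ℝ) + k) * θ with ha
  unfold casW
  rw [zpow_add_one₀ hrpos.ne', zpow_sub_one₀ hrpos.ne']
  push_cast
  rw [show ((x : ℝ) + 1 + k) * θ = a + θ by rw [ha]; ring,
    show ((x : ℝ) - 1 + k) * θ = a - θ by rw [ha]; ring,
    Real.sin_add, Real.sin_sub]
  have h2' : (1 - p) * r⁻¹ = Real.sqrt (p * (1 - p)) := by
    rw [← h2]; ring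
  linear_combination (r ^ x * (Real.sin a * Real.cos θ + Real.cos a * Real.sin θ)) * h1 +
    (r ^ x * (Real.sin a * Real.cos θ - Real.cos a * Real.sin θ)) * h2'

lemma casW_zero (hk : 2 ≤ k) : casW p k 0 = 1 := by
  have hk0 : (k : ℝ) ≠ 0 := by positivity
  unfold casW
  rw [zpow_zero, one_mul]
  rw [show ((0 : ℤ) : ℝ) + k = (k : ℝ) by push_cast; ring]
  rw [show (k : ℝ) * (π / (2 * k)) = π / 2 by field_simp]
  exact Real.sin_pi_div_two

lemma casW_bd (hk : 2 ≤ k) {x : ℤ} (hx : |x| = (k : ℤ)) : casW p k x = 0 := by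
  have hk0 : (k : ℝ) ≠ 0 := by positivity
  rcases abs_eq (by positivity : (0:ℤ) ≤ (k:ℤ)) |>.mp hx with h | h <;> subst h <;> unfold casW
  · rw [show ((k : ℤ) : ℝ) + (k:ℝ) = 2 * k by push_cast; ring]
    rw [show (2 * (k : ℝ)) * (π / (2 * k)) = π by field_simp]
    simp [Real.sin_pi]
  · push_cast
    rw [show (-(k : ℝ) + (k:ℝ)) * (π / (2 * k)) = 0 by ring]
    simp

lemma casW_pos (hp : p ∈ Set.Ioo (1 / 2 : ℝ) 1) (hk : 2 ≤ k) {x : ℤ}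
    (hx : |x| < (k : ℤ)) : 0 < casW p k x := by
  obtain ⟨hp1, hp2⟩ := hp
  have hp0 : 0 < p := by linarith
  have h1p : 0 < 1 - p := by linarith
  have hkR : (0:ℝ) < k := by positivity
  obtain ⟨hx1, hx2⟩ := abs_lt.mp hx
  have hxr1 : (0:ℝ) < (x:ℝ) + k := by
    have : (-(k:ℤ) : ℝ) < (x : ℝ) := by exact_mod_cast hx1
    push_cast at this ⊢; linarith
  have hxr2 : (x:ℝ) + k < 2 * k := by
    have : (x : ℝ) < (k:ℤ) := by exact_mod_cast hx2
    push_cast at this ⊢; linarith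
  have hθpos : 0 < π / (2 * k) := by positivity
  apply mul_pos
  · exact zpow_pos (Real.sqrt_pos.mpr (by positivity)) x
  · apply Real.sin_pos_of_pos_of_lt_pi
    · positivity
    · calc ((x:ℝ) + k) * (π / (2 * k)) < (2 * k) * (π / (2 * k)) := by
            apply mul_lt_mul_of_pos_right hxr2 hθpos
        _ = π := by field_simp

end

lemma casF_theta {p : ℝ} {k : ℕ} (hp : p ∈ Set.Ioo (1 / 2 : ℝ) 1) (hk : 2 ≤ k) :
    ∃ a b : ℝ, 0 < a ∧ a ≤ b ∧ ∀ N : ℕ,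
      a * (2 * Real.sqrt (p * (1 - p)) * Real.cos (π / (2 * k))) ^ N ≤ casF p k N 0 ∧
      casF p k N 0 ≤ b * (2 * Real.sqrt (p * (1 - p)) * Real.cos (π / (2 * k))) ^ N := by
  obtain ⟨hp1, hp2⟩ := hp
  have hp0 : 0 < p := by linarith
  have h1p : 0 < 1 - p := by linarith
  have hkR : (0:ℝ) < k := by positivity
  set μ₀ := 2 * Real.sqrt (p * (1 - p)) * Real.cos (π / (2 * k)) with hμ₀
  have hcos : 0 < Real.cos (π / (2 * k)) := by
    apply Real.cos_pos_of_mem_Ioo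
    constructor
    · have : (0:ℝ) < π / (2 * k) := by positivity
      linarith [Real.pi_pos]
    · rw [div_lt_div_iff₀ (by positivity) (by norm_num)]
      have : (2:ℝ) ≤ k := by exact_mod_cast hk
      nlinarith [Real.pi_pos]
  have hμpos : 0 < μ₀ := by
    apply mul_pos (mul_pos two_pos (Real.sqrt_pos.mpr (by nlinarith))) hcos
  have h0mem : (0:ℤ) ∈ Finset.Icc (-(k:ℤ)) k := by
    simp only [Finset.mem_Icc, abs_le]; omega
  have h0mem2 : (0:ℤ) ∈ Finset.Icc (-(k:ℤ)+1) ((k:ℤ)-1) := by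
    simp only [Finset.mem_Icc, abs_le]; omega
  set Wmax := (Finset.Icc (-(k:ℤ)) k).sup' ⟨0, h0mem⟩ (casW p k) with hWmax
  set C := (Finset.Icc (-(k:ℤ)+1) ((k:ℤ)-1)).sup' ⟨0, h0mem2⟩
      (fun x => 1 / casW p k x) with hC
  have hW1 : 1 ≤ Wmax := by
    have := Finset.le_sup' (casW p k) h0mem
    rwa [casW_zero hk] at this
  have hWub : ∀ x : ℤ, |x| ≤ (k:ℤ) → casW p k x ≤ Wmax := by
    intro x hx
    exact Finset.le_sup' (casW p k) (by simp [abs_le.mp hx])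
  have hCb : ∀ x : ℤ, |x| < (k:ℤ) → 1 ≤ C * casW p k x := by
    intro x hx
    have hwpos := casW_pos ⟨hp1, hp2⟩ hk hx
    have hmem : x ∈ Finset.Icc (-(k:ℤ)+1) ((k:ℤ)-1) := by
      obtain ⟨h1, h2⟩ := abs_lt.mp hx
      simp only [Finset.mem_Icc, abs_le]; omega
    have hle : 1 / casW p k x ≤ C := Finset.le_sup' (fun x => 1 / casW p k x) hmem
    calc (1:ℝ) = (1 / casW p k x) * casW p k x := by field_simp
      _ ≤ C * casW p k x := mul_le_mul_of_nonneg_right hle hwpos.le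
  refine ⟨1 / Wmax, C, by positivity, ?_, ?_⟩
  · have : 1 / Wmax ≤ 1 := by
      rw [div_le_one (by linarith)]; exact hW1
    have hC1 : 1 ≤ C := by simpa [casW_zero hk] using hCb 0 (by simp only [abs_zero]; omega)
    linarith
  · have main : ∀ N : ℕ, ∀ x : ℤ, |x| ≤ (k:ℤ) →
        (1 / Wmax) * μ₀ ^ N * casW p k x ≤ casF p k N x ∧
        casF p k N x ≤ C * μ₀ ^ N * casW p k x := by
      intro N
      induction N with
      | zero =>
        intro x hxle
        rw [casF]
        by_cases h : |x| = (k:ℤ)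
        · simp [h, casW_bd hk h]
        · have hlt : |x| < (k:ℤ) := lt_of_le_of_ne hxle h
          have hwpos := casW_pos ⟨hp1, hp2⟩ hk hlt
          rw [if_neg h, pow_zero]
          constructor
          · have h1 : casW p k x ≤ Wmax := hWub x hxle
            rw [mul_one, div_mul_eq_mul_div, one_mul, div_le_one (by linarith)]
            exact h1
          · have := hCb x hlt
            linarith
      | succ N ih =>
        intro x hxle
        rw [casF]
        by_cases h : |x| = (k:ℤ)
        · simp [h, casW_bd hk h]
        · have hlt : |x| < (k:ℤ) := lt_of_le_of_ne hxle h
          obtain ⟨hl, hr⟩ := abs_lt.mp hlt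
          have hx1 : |x + 1| ≤ (k:ℤ) := abs_le.mpr ⟨by omega, by omega⟩
          have hx2 : |x - 1| ≤ (k:ℤ) := abs_le.mpr ⟨by omega, by omega⟩
          obtain ⟨l1, u1⟩ := ih (x + 1) hx1
          obtain ⟨l2, u2⟩ := ih (x - 1) hx2
          have e := casW_eigen ⟨hp1, hp2⟩ hk x
          rw [if_neg h]
          constructor
          · calc (1 / Wmax) * μ₀ ^ (N + 1) * casW p k x
                = p * ((1 / Wmax) * μ₀ ^ N * casW p k (x + 1)) +
                  (1 - p) * ((1 / Wmax) * μ₀ ^ N * casW p k (x - 1)) := by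
                  linear_combination (-((1 / Wmax) * μ₀ ^ N)) * e
              _ ≤ p * casF p k N (x + 1) + (1 - p) * casF p k N (x - 1) :=
                  add_le_add (mul_le_mul_of_nonneg_left l1 hp0.le)
                    (mul_le_mul_of_nonneg_left l2 h1p.le)
          · calc p * casF p k N (x + 1) + (1 - p) * casF p k N (x - 1)
                ≤ p * (C * μ₀ ^ N * casW p k (x + 1)) +
                  (1 - p) * (C * μ₀ ^ N * casW p k (x - 1)) :=
                  add_le_add (mul_le_mul_of_nonneg_left u1 hp0.le)
                    (mul_le_mul_of_nonneg_left u2 h1p.le)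
              _ = C * μ₀ ^ (N + 1) * casW p k x := by
                  linear_combination (C * μ₀ ^ N) * e
    intro N
    have := main N 0 (by simp only [abs_zero]; omega)
    rwa [casW_zero hk, mul_one, mul_one] at this


section
variable {Ω : Type*} [MeasurableSpace Ω] {μ : Measure Ω}
  {X : ℕ → Ω → ℤ}

lemma measE (hX : ∀ i, Measurable (X i)) (k N m : ℕ) (x : ℤ) :
    MeasurableSet {ω | ∀ n ≤ N, |x + ∑ i ∈ Finset.range n, X (m + 1 + i) ω| ≠ (k : ℤ)} := by
  have he : {ω | ∀ n ≤ N, |x + ∑ i ∈ Finset.range n, X (m + 1 + i) ω| ≠ (k : ℤ)}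
      = ⋂ n ∈ Set.Iic N,
        (fun ω => ∑ i ∈ Finset.range n, X (m + 1 + i) ω) ⁻¹' {z : ℤ | |x + z| ≠ (k : ℤ)} := by
    ext ω; simp [Set.mem_iInter]
  rw [he]
  exact MeasurableSet.biInter (Set.to_countable _)
    (fun n _ => (Finset.measurable_sum _ fun i _ => hX _) MeasurableSet.of_discrete)

lemma indep_piece [IsProbabilityMeasure μ] (hX : ∀ i, Measurable (X i))
    (hindep : iIndepFun X μ) (k N m : ℕ) (c y : ℤ) :
    μ ({ω | X (m + 1) ω = c} ∩
        {ω | ∀ n ≤ N, |y + ∑ i ∈ Finset.range n, X (m + 1 + 1 + i) ω| ≠ (k : ℤ)}) =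
      μ {ω | X (m + 1) ω = c} *
        μ {ω | ∀ n ≤ N, |y + ∑ i ∈ Finset.range n, X (m + 1 + 1 + i) ω| ≠ (k : ℤ)} := by
  classical
  set T : Finset ℕ := (Finset.range N).image (fun i => m + 1 + 1 + i) with hT
  have hdisj : Disjoint ({m + 1} : Finset ℕ) T := by
    simp only [Finset.disjoint_singleton_left, hT, Finset.mem_image, Finset.mem_range]
    rintro ⟨i, -, hi⟩; omega
  have hIF := hindep.indepFun_finset {m + 1} T hdisj hX
  set s : Set (({m + 1} : Finset ℕ) → ℤ) :=
    {v | v ⟨m + 1, Finset.mem_singleton_self _⟩ = c} with hs_def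
  set t : Set (↥T → ℤ) :=
    {v | ∀ n ≤ N, |y + ∑ i ∈ Finset.range n,
      (if h : m + 1 + 1 + i ∈ T then v ⟨m + 1 + 1 + i, h⟩ else 0)| ≠ (k : ℤ)} with ht_def
  have hs : MeasurableSet s := by
    have hseq : s = (fun v : ↥({m + 1} : Finset ℕ) → ℤ =>
        v ⟨m + 1, Finset.mem_singleton_self _⟩) ⁻¹' {z : ℤ | z = c} := rfl
    rw [hseq]
    exact (measurable_pi_apply _) MeasurableSet.of_discrete
  have ht : MeasurableSet t := by
    have he : t = ⋂ n ∈ Set.Iic N,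
        (fun v : ↥T → ℤ => ∑ i ∈ Finset.range n,
          (if h : m + 1 + 1 + i ∈ T then v ⟨m + 1 + 1 + i, h⟩ else 0)) ⁻¹'
          {z : ℤ | |y + z| ≠ (k : ℤ)} := by
      ext v
      simp only [ht_def, Set.mem_setOf_eq, Set.mem_iInter, Set.mem_preimage]
      tauto
    rw [he]
    refine MeasurableSet.biInter (Set.to_countable _) (fun n _ => ?_)
    refine (Finset.measurable_sum _ fun i _ => ?_) MeasurableSet.of_discrete
    by_cases h : m + 1 + 1 + i ∈ T
    · simp only [dif_pos h]; exact measurable_pi_apply _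
    · simp only [dif_neg h]; exact measurable_const
  have key := (indepFun_iff_measure_inter_preimage_eq_mul.mp hIF) s t hs ht
  have hmem : ∀ {n : ℕ}, n ≤ N → ∀ i ∈ Finset.range n, m + 1 + 1 + i ∈ T := by
    intro n hn i hi
    exact Finset.mem_image.mpr ⟨i, Finset.mem_range.mpr
      (lt_of_lt_of_le (Finset.mem_range.mp hi) hn), rfl⟩
  have e1 : (fun a (i : ({m + 1} : Finset ℕ)) => X i a) ⁻¹' s = {ω | X (m + 1) ω = c} := rfl
  have e2 : (fun a (i : ↥T) => X i a) ⁻¹' t =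
      {ω | ∀ n ≤ N, |y + ∑ i ∈ Finset.range n, X (m + 1 + 1 + i) ω| ≠ (k : ℤ)} := by
    ext ω
    simp only [Set.mem_preimage, ht_def, Set.mem_setOf_eq]
    constructor
    · intro hv n hn
      have := hv n hn
      rwa [Finset.sum_congr rfl (fun i hi => dif_pos (hmem hn i hi))] at this
    · intro hv n hn
      rw [Finset.sum_congr rfl (fun i hi => dif_pos (hmem hn i hi))]
      exact hv n hn
  rwa [e1, e2] at key


lemma cas_prob [IsProbabilityMeasure μ] {p : ℝ} (hp : p ∈ Set.Ioo (1 / 2 : ℝ) 1) {k : ℕ}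
    (hX : ∀ i, Measurable (X i))
    (hindep : iIndepFun X μ)
    (hup : ∀ i, μ {ω | X i ω = 1} = ENNReal.ofReal p)
    (hdown : ∀ i, μ {ω | X i ω = -1} = ENNReal.ofReal (1 - p)) :
    ∀ N m : ℕ, ∀ x : ℤ,
      μ {ω | ∀ n ≤ N, |x + ∑ i ∈ Finset.range n, X (m + 1 + i) ω| ≠ (k : ℤ)} =
        ENNReal.ofReal (casF p k N x) := by
  obtain ⟨hp1, hp2⟩ := hp
  have hp0 : (0:ℝ) ≤ p := by linarith
  have h1p : (0:ℝ) ≤ 1 - p := by linarith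
  intro N
  induction N with
  | zero =>
    intro m x
    by_cases hxk : |x| = (k : ℤ)
    · have he : {ω : Ω | ∀ n ≤ 0, |x + ∑ i ∈ Finset.range n, X (m + 1 + i) ω| ≠ (k : ℤ)} = ∅ := by
        ext ω
        simp only [Set.mem_setOf_eq, Set.mem_empty_iff_false, iff_false, not_forall]
        exact ⟨0, le_rfl, by simpa using hxk⟩
      rw [he, casF, if_pos hxk]
      simp
    · have he : {ω : Ω | ∀ n ≤ 0, |x + ∑ i ∈ Finset.range n, X (m + 1 + i) ω| ≠ (k : ℤ)} =
          Set.univ := by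
        ext ω
        simp only [Set.mem_setOf_eq, Set.mem_univ, iff_true, Nat.le_zero]
        intro n hn; subst hn; simpa using hxk
      rw [he, casF, if_neg hxk]
      simp
  | succ N ih =>
    intro m x
    by_cases hxk : |x| = (k : ℤ)
    · have he : {ω : Ω | ∀ n ≤ N + 1, |x + ∑ i ∈ Finset.range n, X (m + 1 + i) ω| ≠ (k : ℤ)}
          = ∅ := by
        ext ω
        simp only [Set.mem_setOf_eq, Set.mem_empty_iff_false, iff_false, not_forall]
        exact ⟨0, Nat.zero_le _, by simpa using hxk⟩
      rw [he, casF, if_pos hxk]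
      simp
    · set E := {ω : Ω | ∀ n ≤ N + 1, |x + ∑ i ∈ Finset.range n, X (m + 1 + i) ω| ≠ (k : ℤ)}
        with hE_def
      set E1 := {ω : Ω | ∀ n ≤ N,
        |(x + 1) + ∑ i ∈ Finset.range n, X (m + 1 + 1 + i) ω| ≠ (k : ℤ)} with hE1_def
      set E2 := {ω : Ω | ∀ n ≤ N,
        |(x - 1) + ∑ i ∈ Finset.range n, X (m + 1 + 1 + i) ω| ≠ (k : ℤ)} with hE2_def
      set B1 := {ω : Ω | X (m + 1) ω = 1} with hB1_def
      set B2 := {ω : Ω | X (m + 1) ω = -1} with hB2_def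
      have hB1m : MeasurableSet B1 := (hX (m + 1)) (MeasurableSet.singleton (1 : ℤ))
      have hB2m : MeasurableSet B2 := (hX (m + 1)) (MeasurableSet.singleton (-1 : ℤ))
      have hEm : MeasurableSet E := measE hX k (N + 1) m x
      have hsum : ∀ (n : ℕ) (ω : Ω), ∑ i ∈ Finset.range (n + 1), X (m + 1 + i) ω =
          X (m + 1) ω + ∑ i ∈ Finset.range n, X (m + 1 + 1 + i) ω := by
        intro n ω
        rw [Finset.sum_range_succ']
        have hcg : ∑ i ∈ Finset.range n, X (m + 1 + (i + 1)) ω =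
            ∑ i ∈ Finset.range n, X (m + 1 + 1 + i) ω :=
          Finset.sum_congr rfl fun i _ => by rw [show m + 1 + (i + 1) = m + 1 + 1 + i by omega]
        rw [hcg, Nat.add_zero, add_comm]
      -- key set identities
      have hsplit1 : E ∩ B1 = B1 ∩ E1 := by
        ext ω
        simp only [hE_def, hE1_def, hB1_def, Set.mem_inter_iff, Set.mem_setOf_eq]
        constructor
        · rintro ⟨hE, hB⟩
          refine ⟨hB, fun n hn => ?_⟩
          have h := hE (n + 1) (by omega)
          rw [hsum n ω, hB] at h
          rwa [show x + (1 + ∑ i ∈ Finset.range n, X (m + 1 + 1 + i) ω) =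
            x + 1 + ∑ i ∈ Finset.range n, X (m + 1 + 1 + i) ω by ring] at h
        · rintro ⟨hB, hE1⟩
          refine ⟨fun n hn => ?_, hB⟩
          match n with
          | 0 => simpa using hxk
          | n + 1 =>
            have h := hE1 n (by omega)
            rw [hsum n ω, hB]
            rwa [show x + (1 + ∑ i ∈ Finset.range n, X (m + 1 + 1 + i) ω) =
              x + 1 + ∑ i ∈ Finset.range n, X (m + 1 + 1 + i) ω by ring]
      have hsplit2 : E ∩ B2 = B2 ∩ E2 := by
        ext ω
        simp only [hE_def, hE2_def, hB2_def, Set.mem_inter_iff, Set.mem_setOf_eq]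
        constructor
        · rintro ⟨hE, hB⟩
          refine ⟨hB, fun n hn => ?_⟩
          have h := hE (n + 1) (by omega)
          rw [hsum n ω, hB] at h
          rwa [show x + (-1 + ∑ i ∈ Finset.range n, X (m + 1 + 1 + i) ω) =
            x - 1 + ∑ i ∈ Finset.range n, X (m + 1 + 1 + i) ω by ring] at h
        · rintro ⟨hB, hE2⟩
          refine ⟨fun n hn => ?_, hB⟩
          match n with
          | 0 => simpa using hxk
          | n + 1 =>
            have h := hE2 n (by omega)
            rw [hsum n ω, hB]
            rwa [show x + (-1 + ∑ i ∈ Finset.range n, X (m + 1 + 1 + i) ω) =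
              x - 1 + ∑ i ∈ Finset.range n, X (m + 1 + 1 + i) ω by ring]
      have hd12 : Disjoint B1 B2 := by
        rw [Set.disjoint_left]
        intro ω h1 h2
        simp only [hB1_def, hB2_def, Set.mem_setOf_eq] at h1 h2
        omega
      have hBu : μ (B1 ∪ B2) = 1 := by
        rw [measure_union hd12 hB2m, hup, hdown, ← ENNReal.ofReal_add hp0 h1p,
          show p + (1 - p) = 1 by ring, ENNReal.ofReal_one]
      have hBc : μ (B1 ∪ B2)ᶜ = 0 := by
        rw [prob_compl_eq_zero_iff (hB1m.union hB2m)]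
        exact hBu
      -- decompose μ E
      have hme : μ E = μ (E ∩ B1) + μ (E ∩ B2) := by
        have hdd : μ (E \ (B1 ∪ B2)) = 0 :=
          measure_mono_null (fun ω h => h.2) hBc
        have huu : μ ((E ∩ B1) ∪ (E ∩ B2)) = μ (E ∩ B1) + μ (E ∩ B2) :=
          measure_union (hd12.mono Set.inter_subset_right Set.inter_subset_right)
            (hEm.inter hB2m)
        apply le_antisymm
        · calc μ E ≤ μ (E ∩ (B1 ∪ B2)) + μ (E \ (B1 ∪ B2)) :=
                measure_le_inter_add_diff μ E (B1 ∪ B2)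
            _ = μ ((E ∩ B1) ∪ (E ∩ B2)) := by
                rw [hdd, add_zero, Set.inter_union_distrib_left]
            _ = μ (E ∩ B1) + μ (E ∩ B2) := huu
        · rw [← huu]
          exact measure_mono (Set.union_subset Set.inter_subset_left Set.inter_subset_left)
      rw [hme, hsplit1, hsplit2, indep_piece hX hindep k N m 1 (x + 1),
        indep_piece hX hindep k N m (-1) (x - 1)]
      have hih1 := ih (m + 1) (x + 1)
      have hih2 := ih (m + 1) (x - 1)
      rw [show m + 1 + 1 = m + 2 from rfl] at *
      rw [hih1, hih2, hup, hdown]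
      rw [casF, if_neg hxk, ENNReal.ofReal_add (mul_nonneg hp0 (casF_nonneg ⟨hp1, hp2⟩ N (x + 1)))
        (mul_nonneg h1p (casF_nonneg ⟨hp1, hp2⟩ N (x - 1))),
        ENNReal.ofReal_mul hp0, ENNReal.ofReal_mul h1p]

end

/-- **Proposition 7(i)** (rate of cascade onset): for the biased walk
`K_n = Σ_{i=1}^n X_i` with i.i.d. `±1` steps (`+1` with probability `p > 1/2`) and absorbing
boundaries `±k` (`k ≥ 2`), the tail probability of the cascade time `τ` satisfies
`P[τ > N] = Θ(λ^{N/2})` with `λ = 4p(1−p)·cos²(π/(2k))`. -/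
theorem cascade_time_tail_rate {Ω : Type*} [MeasurableSpace Ω] (μ : Measure Ω)
    [IsProbabilityMeasure μ] (p : ℝ) (hp : p ∈ Set.Ioo (1 / 2 : ℝ) 1)
    (k : ℕ) (hk : 2 ≤ k)
    (X : ℕ → Ω → ℤ) (hX : ∀ i, Measurable (X i))
    (hindep : iIndepFun X μ)
    (hup : ∀ i, μ {ω | X i ω = 1} = ENNReal.ofReal p)
    (hdown : ∀ i, μ {ω | X i ω = -1} = ENNReal.ofReal (1 - p)) :
    ∃ a b : ℝ, ∃ N₀ : ℕ, 0 < a ∧ a ≤ b ∧ ∀ N : ℕ, N₀ ≤ N →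
      a * (4 * p * (1 - p) * Real.cos (π / (2 * k)) ^ 2) ^ ((N : ℝ) / 2) ≤
        (μ {ω | ∀ n ≤ N, |∑ i ∈ Finset.range n, X (i + 1) ω| ≠ (k : ℤ)}).toReal ∧
      (μ {ω | ∀ n ≤ N, |∑ i ∈ Finset.range n, X (i + 1) ω| ≠ (k : ℤ)}).toReal ≤
        b * (4 * p * (1 - p) * Real.cos (π / (2 * k)) ^ 2) ^ ((N : ℝ) / 2) := by
  obtain ⟨hp1, hp2⟩ := hp
  have hp0 : (0:ℝ) < p := by linarith
  have h1p : (0:ℝ) < 1 - p := by linarith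
  set μ₀ := 2 * Real.sqrt (p * (1 - p)) * Real.cos (π / (2 * k)) with hμ₀
  have hμ0le : (0:ℝ) ≤ μ₀ := by
    have : (0:ℝ) ≤ Real.sqrt (p * (1 - p)) := Real.sqrt_nonneg _
    have hcos : 0 < Real.cos (π / (2 * k)) := by
      apply Real.cos_pos_of_mem_Ioo
      constructor
      · have hkR : (0:ℝ) < k := by positivity
        have : (0:ℝ) < π / (2 * k) := by positivity
        linarith [Real.pi_pos]
      · have hkR : (0:ℝ) < k := by positivity
        rw [div_lt_div_iff₀ (by positivity) (by norm_num)]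
        have h2k : (2:ℝ) ≤ k := by exact_mod_cast hk
        nlinarith [Real.pi_pos]
    positivity
  have hbase : 4 * p * (1 - p) * Real.cos (π / (2 * k)) ^ 2 = μ₀ ^ 2 := by
    rw [hμ₀, mul_pow, mul_pow, Real.sq_sqrt (by nlinarith)]
    ring
  have hexp : ∀ N : ℕ,
      (4 * p * (1 - p) * Real.cos (π / (2 * k)) ^ 2) ^ ((N : ℝ) / 2) = μ₀ ^ N := by
    intro N
    rw [hbase, ← Real.rpow_natCast μ₀ 2, ← Real.rpow_mul hμ0le,
      show ((2:ℕ):ℝ) * ((N:ℝ) / 2) = (N:ℝ) by push_cast; ring, Real.rpow_natCast]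
  have hset : ∀ N : ℕ, {ω : Ω | ∀ n ≤ N, |∑ i ∈ Finset.range n, X (i + 1) ω| ≠ (k : ℤ)} =
      {ω : Ω | ∀ n ≤ N, |(0:ℤ) + ∑ i ∈ Finset.range n, X (0 + 1 + i) ω| ≠ (k : ℤ)} := by
    intro N
    ext ω
    have hc : ∀ n : ℕ, ∑ i ∈ Finset.range n, X (0 + 1 + i) ω =
        ∑ i ∈ Finset.range n, X (i + 1) ω :=
      fun n => Finset.sum_congr rfl fun i _ => by rw [show 0 + 1 + i = i + 1 by omega]
    simp only [Set.mem_setOf_eq, hc, zero_add]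
  have hprob : ∀ N : ℕ,
      (μ {ω : Ω | ∀ n ≤ N, |∑ i ∈ Finset.range n, X (i + 1) ω| ≠ (k : ℤ)}).toReal =
        casF p k N 0 := by
    intro N
    rw [hset N, cas_prob ⟨hp1, hp2⟩ hX hindep hup hdown N 0 0,
      ENNReal.toReal_ofReal (casF_nonneg ⟨hp1, hp2⟩ N 0)]
  obtain ⟨a, b, ha, hab, hbound⟩ := casF_theta ⟨hp1, hp2⟩ hk
  refine ⟨a, b, 0, ha, hab, fun N _ => ?_⟩
  rw [hprob N, hexp N]
  exact hbound N
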